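/- Let a > 0 and let μ be the uniform probability measure on the interval [-a/2, a/2] ⊂ ℝ. Define f : [-a/2, a/2] → ℝ by f(x) = x + a/2 if x < 0 and f(x) = x - a/2 if x ≥ 0. Then f pushes μ forward to μ, and the plan γ = (id, f)_# μ is optimal for the two-marginal Kantorovich problem with Coulomb cost: ∫ 1/|x - f(x)| dμ(x) = inf_{γ ∈ Π(μ,μ)} ∫ 1/|x - y| dγ(x,y). -/

import Mathlib

open MeasureTheory ENNReal


private lemma aux_abs_integral (c : ℝ) (hc : 0 < c) :
    ∫ x in Set.Icc (-c) c, |x| = c ^ 2 := by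
  have hi : ∀ u v : ℝ, IntervalIntegrable (fun x => |x|) volume u v :=
    fun u v => (continuous_abs).intervalIntegrable u v
  have h1 : ∫ x in (-c)..0, |x| = c ^ 2 / 2 := by
    have : ∫ x in (-c)..0, |x| = ∫ x in (-c)..0, -x := by
      apply intervalIntegral.integral_congr
      intro x hx
      rw [Set.uIcc_of_le (by linarith)] at hx
      exact abs_of_nonpos hx.2
    rw [this, intervalIntegral.integral_neg, integral_id]
    ring
  have h2 : ∫ x in (0:ℝ)..c, |x| = c ^ 2 / 2 := by
    have : ∫ x in (0:ℝ)..c, |x| = ∫ x in (0:ℝ)..c, x := by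
      apply intervalIntegral.integral_congr
      intro x hx
      rw [Set.uIcc_of_le (by linarith)] at hx
      exact abs_of_nonneg hx.1
    rw [this, integral_id]
    ring
  have hadd := intervalIntegral.integral_add_adjacent_intervals (hi (-c) 0) (hi 0 c)
  rw [h1, h2] at hadd
  rw [MeasureTheory.integral_Icc_eq_integral_Ioc,
    ← intervalIntegral.integral_of_le (by linarith), ← hadd]
  ring

private lemma aux_pushforward (a : ℝ) (ha : 0 < a) :
    Measure.map (fun x => if x < 0 then x + a / 2 else x - a / 2)
      (volume.restrict (Set.Icc (-(a / 2)) (a / 2)))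
      = volume.restrict (Set.Icc (-(a / 2)) (a / 2)) := by
  set c := a / 2 with hc
  have hc0 : 0 < c := by positivity
  have hmf : Measurable (fun x : ℝ => if x < 0 then x + a / 2 else x - a / 2) := by
    apply Measurable.ite (measurableSet_Iio (a := (0:ℝ))) <;> fun_prop
  have hsplit : volume.restrict (Set.Icc (-c) c)
      = volume.restrict (Set.Ico (-c) 0) + volume.restrict (Set.Ico 0 c) := by
    have hu : Set.Ico (-c) 0 ∪ Set.Ico 0 c = Set.Ico (-c) c :=
      Set.Ico_union_Ico_eq_Ico (by linarith) (by linarith)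
    rw [← restrict_Ico_eq_restrict_Icc, ← hu,
      Measure.restrict_union Set.Ico_disjoint_Ico_same measurableSet_Ico]
  have h1 : Measure.map (fun x : ℝ => if x < 0 then x + a / 2 else x - a / 2)
      (volume.restrict (Set.Ico (-c) 0)) = volume.restrict (Set.Ico 0 c) := by
    have he : (fun x : ℝ => if x < 0 then x + a / 2 else x - a / 2)
        =ᵐ[volume.restrict (Set.Ico (-c) 0)] (fun x => x + c) := by
      refine (ae_restrict_iff' measurableSet_Ico).2 (Filter.Eventually.of_forall ?_)
      intro x hx; simp [if_pos hx.2, hc]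
    rw [Measure.map_congr he]
    have hp : Set.Ico (-c) 0 = (fun x : ℝ => x + c) ⁻¹' (Set.Ico 0 c) := by
      ext x; simp only [Set.mem_preimage, Set.mem_Ico]
      constructor <;> intro h <;> constructor <;> linarith [h.1, h.2]
    rw [hp]
    exact ((measurePreserving_add_right volume c).restrict_preimage measurableSet_Ico).map_eq
  have h2 : Measure.map (fun x : ℝ => if x < 0 then x + a / 2 else x - a / 2)
      (volume.restrict (Set.Ico 0 c)) = volume.restrict (Set.Ico (-c) 0) := by
    have he : (fun x : ℝ => if x < 0 then x + a / 2 else x - a / 2)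
        =ᵐ[volume.restrict (Set.Ico 0 c)] (fun x => x + (-c)) := by
      refine (ae_restrict_iff' measurableSet_Ico).2 (Filter.Eventually.of_forall ?_)
      intro x hx; simp [if_neg (not_lt.2 hx.1), hc, sub_eq_add_neg]
    rw [Measure.map_congr he]
    have hp : Set.Ico 0 c = (fun x : ℝ => x + (-c)) ⁻¹' (Set.Ico (-c) 0) := by
      ext x; simp only [Set.mem_preimage, Set.mem_Ico]
      constructor <;> intro h <;> constructor <;> linarith [h.1, h.2]
    rw [hp]
    exact ((measurePreserving_add_right volume (-c)).restrict_preimage measurableSet_Ico).map_eq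
  rw [hsplit, Measure.map_add _ _ hmf, h1, h2, add_comm]

private lemma aux_amgm (a : ℝ) (ha : 0 < a) (x y : ℝ) :
    ENNReal.ofReal (4 / a) ≤ (edist x y)⁻¹ + ENNReal.ofReal (4 / a ^ 2) * edist x y := by
  rcases eq_or_ne x y with h | h
  · simp [h]
  · have hs : 0 < |x - y| := abs_pos.2 (sub_ne_zero.2 h)
    rw [edist_dist, Real.dist_eq, ← ENNReal.ofReal_inv_of_pos hs,
      ← ENNReal.ofReal_mul (by positivity), ← ENNReal.ofReal_add (by positivity) (by positivity)]
    apply ENNReal.ofReal_le_ofReal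
    set s := |x - y| with hsdef
    have key : (0:ℝ) ≤ a ^ 2 + 4 * s ^ 2 - 4 * a * s := by nlinarith [sq_nonneg (a - 2 * s)]
    have heq : s⁻¹ + 4 / a ^ 2 * s - 4 / a = (a ^ 2 + 4 * s ^ 2 - 4 * a * s) / (a ^ 2 * s) := by
      field_simp
    have hnn : (0:ℝ) ≤ (a ^ 2 + 4 * s ^ 2 - 4 * a * s) / (a ^ 2 * s) :=
      div_nonneg key (by positivity)
    linarith

/-- For the uniform probability measure `μ` on `[-a/2, a/2]`, the map
`f(x) = x + a/2` for `x < 0` and `f(x) = x - a/2` for `x ≥ 0` pushes `μ` forward to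
itself and the plan `(id,f)_#μ` is optimal for the two-marginal Kantorovich problem
with Coulomb cost. -/
theorem uniform_1d_comotion_optimal
    (a : ℝ) (ha : 0 < a)
    (μ : Measure ℝ)
    (hμ : μ = (ENNReal.ofReal a)⁻¹ • volume.restrict (Set.Icc (-(a / 2)) (a / 2)))
    (f : ℝ → ℝ)
    (hf : f = fun x => if x < 0 then x + a / 2 else x - a / 2) :
    Measure.map f μ = μ ∧
    ∫⁻ x, (edist x (f x))⁻¹ ∂μ =
      ⨅ (γ : Measure (ℝ × ℝ))
        (_ : IsProbabilityMeasure γ)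
        (_ : Measure.map Prod.fst γ = μ)
        (_ : Measure.map Prod.snd γ = μ),
        ∫⁻ p, (edist p.1 p.2)⁻¹ ∂γ := by

  have hc0 : 0 < a / 2 := by linarith
  have hmf : Measurable f := by
    rw [hf]; apply Measurable.ite (measurableSet_Iio (a := (0:ℝ))) <;> fun_prop
  have hmap : Measure.map f μ = μ := by
    rw [hμ, hf, Measure.map_smul, aux_pushforward a ha]
  have hμ1 : μ Set.univ = 1 := by
    rw [hμ, Measure.smul_apply, Measure.restrict_apply_univ, Real.volume_Icc]
    rw [show a / 2 - -(a / 2) = a by ring, smul_eq_mul,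
      ENNReal.inv_mul_cancel (ENNReal.ofReal_pos.2 ha).ne' ofReal_ne_top]
  have hP : IsProbabilityMeasure μ := ⟨hμ1⟩
  have hed : ∀ x, edist x (f x) = ENNReal.ofReal (a / 2) := by
    intro x; rw [hf]
    by_cases hx : x < 0
    · simp only [if_pos hx]
      rw [edist_dist, Real.dist_eq, show x - (x + a / 2) = -(a / 2) by ring, abs_neg,
        abs_of_pos hc0]
    · simp only [if_neg hx]
      rw [edist_dist, Real.dist_eq, show x - (x - a / 2) = a / 2 by ring, abs_of_pos hc0]
  have hinv2a : (ENNReal.ofReal (a / 2))⁻¹ = ENNReal.ofReal (2 / a) := by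
    rw [← ENNReal.ofReal_inv_of_pos hc0, inv_div]
  have hLHS : ∫⁻ x, (edist x (f x))⁻¹ ∂μ = ENNReal.ofReal (2 / a) := by
    simp only [hed, hinv2a]
    rw [lintegral_const, hμ1, mul_one]
  have hof : Measurable (fun x : ℝ => ENNReal.ofReal |x|) := by fun_prop
  have hE : ∫⁻ x, ENNReal.ofReal |x| ∂μ = ENNReal.ofReal (a / 4) := by
    rw [hμ, lintegral_smul_measure]
    have hint : ∫⁻ x in Set.Icc (-(a / 2)) (a / 2), ENNReal.ofReal |x|
        = ENNReal.ofReal (a ^ 2 / 4) := by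
      rw [← ofReal_integral_eq_lintegral_ofReal
        ((continuous_abs).integrableOn_Icc)
        (Filter.Eventually.of_forall fun x => abs_nonneg x)]
      rw [aux_abs_integral (a / 2) hc0]
      congr 1; ring
    rw [hint, smul_eq_mul, ← ENNReal.ofReal_inv_of_pos ha, ← ENNReal.ofReal_mul (by positivity)]
    congr 1; field_simp
  have hmeas_inv : Measurable (fun p : ℝ × ℝ => (edist p.1 p.2)⁻¹) := measurable_edist.inv
  have hlow : ∀ (γ : Measure (ℝ × ℝ)), IsProbabilityMeasure γ →
      Measure.map Prod.fst γ = μ → Measure.map Prod.snd γ = μ →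
      ENNReal.ofReal (2 / a) ≤ ∫⁻ p, (edist p.1 p.2)⁻¹ ∂γ := by
    intro γ hPγ h1 h2
    have hEfst : ∫⁻ p, ENNReal.ofReal |p.1| ∂γ = ENNReal.ofReal (a / 4) := by
      rw [← hE, ← h1, lintegral_map hof measurable_fst]
    have hEsnd : ∫⁻ p, ENNReal.ofReal |p.2| ∂γ = ENNReal.ofReal (a / 4) := by
      rw [← hE, ← h2, lintegral_map hof measurable_snd]
    have hedist_le : ∫⁻ p, edist p.1 p.2 ∂γ ≤ ENNReal.ofReal (a / 2) := by
      calc ∫⁻ p, edist p.1 p.2 ∂γ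
          ≤ ∫⁻ p, (ENNReal.ofReal |p.1| + ENNReal.ofReal |p.2|) ∂γ := by
            apply lintegral_mono; intro p
            dsimp only
            rw [edist_dist, Real.dist_eq, ← ENNReal.ofReal_add (abs_nonneg _) (abs_nonneg _)]
            apply ENNReal.ofReal_le_ofReal
            simpa [Real.norm_eq_abs] using norm_sub_le p.1 p.2
        _ = ENNReal.ofReal (a / 4) + ENNReal.ofReal (a / 4) := by
            have hof1 : Measurable fun p : ℝ × ℝ => ENNReal.ofReal |p.1| := by fun_prop
            rw [lintegral_add_left hof1, hEfst, hEsnd]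
        _ = ENNReal.ofReal (a / 2) := by
            rw [← ENNReal.ofReal_add (by positivity) (by positivity)]
            congr 1; ring
    have step : ENNReal.ofReal (4 / a)
        ≤ ∫⁻ p, (edist p.1 p.2)⁻¹ ∂γ + ENNReal.ofReal (4 / a ^ 2) * ∫⁻ p, edist p.1 p.2 ∂γ := by
      calc ENNReal.ofReal (4 / a) = ∫⁻ _, ENNReal.ofReal (4 / a) ∂γ := by
            rw [lintegral_const, measure_univ, mul_one]
        _ ≤ ∫⁻ p, ((edist p.1 p.2)⁻¹ + ENNReal.ofReal (4 / a ^ 2) * edist p.1 p.2) ∂γ :=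
            lintegral_mono fun p => aux_amgm a ha p.1 p.2
        _ = ∫⁻ p, (edist p.1 p.2)⁻¹ ∂γ
            + ENNReal.ofReal (4 / a ^ 2) * ∫⁻ p, edist p.1 p.2 ∂γ := by
            rw [lintegral_add_left hmeas_inv, lintegral_const_mul _ measurable_edist]
    have step2 : ENNReal.ofReal (2 / a) + ENNReal.ofReal (2 / a)
        ≤ ∫⁻ p, (edist p.1 p.2)⁻¹ ∂γ + ENNReal.ofReal (2 / a) := by
      have h4a : ENNReal.ofReal (2 / a) + ENNReal.ofReal (2 / a) = ENNReal.ofReal (4 / a) := by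
        rw [← ENNReal.ofReal_add (by positivity) (by positivity)]; congr 1; ring
      have hmul : ENNReal.ofReal (4 / a ^ 2) * ENNReal.ofReal (a / 2)
          = ENNReal.ofReal (2 / a) := by
        rw [← ENNReal.ofReal_mul (by positivity)]; congr 1; field_simp; ring
      calc ENNReal.ofReal (2 / a) + ENNReal.ofReal (2 / a) = ENNReal.ofReal (4 / a) := h4a
        _ ≤ ∫⁻ p, (edist p.1 p.2)⁻¹ ∂γ + ENNReal.ofReal (4 / a ^ 2) * ∫⁻ p, edist p.1 p.2 ∂γ :=
            step
        _ ≤ ∫⁻ p, (edist p.1 p.2)⁻¹ ∂γ + ENNReal.ofReal (4 / a ^ 2) * ENNReal.ofReal (a / 2) :=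
            add_le_add_right (mul_le_mul_right hedist_le _) _
        _ = ∫⁻ p, (edist p.1 p.2)⁻¹ ∂γ + ENNReal.ofReal (2 / a) := by rw [hmul]
    exact (ENNReal.add_le_add_iff_right ofReal_ne_top).1 step2
  refine ⟨hmap, ?_⟩
  rw [hLHS]
  apply le_antisymm
  · exact le_iInf fun γ => le_iInf fun hPγ => le_iInf fun h1 => le_iInf fun h2 =>
      hlow γ hPγ h1 h2
  · set γ₀ := Measure.map (fun x => (x, f x)) μ with hγ₀
    have hγm : Measurable fun x : ℝ => (x, f x) := measurable_id.prodMk hmf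
    have hPγ₀ : IsProbabilityMeasure γ₀ := Measure.isProbabilityMeasure_map hγm.aemeasurable
    have hfst : Measure.map Prod.fst γ₀ = μ := by
      rw [hγ₀, Measure.map_map measurable_fst hγm]
      exact Measure.map_id
    have hsnd : Measure.map Prod.snd γ₀ = μ := by
      rw [hγ₀, Measure.map_map measurable_snd hγm]
      exact hmap
    have hcost : ∫⁻ p, (edist p.1 p.2)⁻¹ ∂γ₀ = ENNReal.ofReal (2 / a) := by
      rw [hγ₀, lintegral_map hmeas_inv hγm]
      exact hLHS
    exact iInf_le_of_le γ₀ (iInf_le_of_le hPγ₀ (iInf_le_of_le hfst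
      (iInf_le_of_le hsnd (le_of_eq hcost))))
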